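/- arXiv:2308.01788 — 2 statements merged into one kernel-verified Lean document; each statement's English description precedes it below -/
import Mathlib

section
/- For every ρ > 0 and all y₁, y₂ ∈ E with ‖y₁‖ ≤ ρ and ‖y₂‖ ≤ ρ, the normalization constant is Lipschitz continuous in the data: |Λ(y₁) − Λ(y₂)| ≤ (K + ρ) ‖y₁ − y₂‖. -/
open MeasureTheory Real

/-- For every `ρ > 0` and all `y₁, y₂ ∈ E` with `‖y₁‖ ≤ ρ` and
`‖y₂‖ ≤ ρ`, the normalization constant `Λ(y) = ∫_U exp(−½‖y − G(Z)‖²) dν₀(Z)`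
is Lipschitz in the data: `|Λ(y₁) − Λ(y₂)| ≤ (K + ρ) ‖y₁ − y₂‖`. -/
theorem normalization_constant_lipschitz
    {U : Type*} [MeasurableSpace U] {E : Type*}
    [NormedAddCommGroup E] [InnerProductSpace ℝ E]
    [MeasurableSpace E] [OpensMeasurableSpace E]
    (ν₀ : Measure U) [IsProbabilityMeasure ν₀]
    (G : U → E) (hGmeas : Measurable G) (K : ℝ) (hK : ∀ Z, ‖G Z‖ ≤ K)
    (θ : U → E → ℝ) (hθ : ∀ Z y, θ Z y = Real.exp (-((1 / 2) * ‖y - G Z‖ ^ 2)))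
    (Λ : E → ℝ) (hΛ : ∀ y, Λ y = ∫ Z, θ Z y ∂ν₀) :
    ∀ ρ : ℝ, 0 < ρ → ∀ y₁ y₂ : E, ‖y₁‖ ≤ ρ → ‖y₂‖ ≤ ρ →
      |Λ y₁ - Λ y₂| ≤ (K + ρ) * ‖y₁ - y₂‖ := by
  intro ρ hρ y₁ y₂ hy₁ hy₂
  -- exp is 1-Lipschitz on nonpositive reals
  have exp_lip : ∀ a b : ℝ, 0 ≤ a → 0 ≤ b → |Real.exp (-a) - Real.exp (-b)| ≤ |a - b| := by
    have key : ∀ a b : ℝ, 0 ≤ a → 0 ≤ b → a ≤ b →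
        Real.exp (-a) - Real.exp (-b) ≤ b - a := by
      intro a b ha hb hab
      have h1 : Real.exp (-a) - Real.exp (-b)
          = Real.exp (-a) * (1 - Real.exp (-(b - a))) := by
        rw [mul_sub, mul_one, ← Real.exp_add]; ring_nf
      rw [h1]
      have h2 : 1 - Real.exp (-(b - a)) ≤ b - a := by
        have := Real.add_one_le_exp (-(b - a)); linarith
      have h3 : Real.exp (-a) ≤ 1 := Real.exp_le_one_iff.mpr (by linarith)
      have h4 : 0 ≤ 1 - Real.exp (-(b - a)) := by
        have := Real.exp_le_one_iff.mpr (show -(b - a) ≤ 0 by linarith); linarith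
      calc Real.exp (-a) * (1 - Real.exp (-(b - a)))
          ≤ 1 * (b - a) := mul_le_mul h3 h2 h4 zero_le_one
        _ = b - a := one_mul _
    intro a b ha hb
    rcases le_total a b with h | h
    · rw [abs_of_nonneg (sub_nonneg.mpr (Real.exp_le_exp.mpr (by linarith))),
        abs_of_nonpos (by linarith)]
      have := key a b ha hb h; linarith
    · rw [abs_of_nonpos (sub_nonpos.mpr (Real.exp_le_exp.mpr (by linarith))),
        abs_of_nonneg (by linarith)]
      have := key b a hb ha h; linarith
  have hU : Nonempty U := by
    by_contra h
    rw [not_nonempty_iff] at h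
    have h1 : ν₀ Set.univ = 1 := measure_univ
    rw [Set.univ_eq_empty_iff.mpr h, measure_empty] at h1
    exact zero_ne_one h1
  have hK0 : 0 ≤ K := le_trans (norm_nonneg _) (hK (Classical.arbitrary U))
  -- pointwise bound
  have hpt : ∀ Z, |θ Z y₁ - θ Z y₂| ≤ (K + ρ) * ‖y₁ - y₂‖ := by
    intro Z
    rw [hθ, hθ]
    have h1 : ‖y₁ - G Z‖ ≤ ρ + K := by
      calc ‖y₁ - G Z‖ ≤ ‖y₁‖ + ‖G Z‖ := norm_sub_le _ _
        _ ≤ ρ + K := add_le_add hy₁ (hK Z)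
    have h2 : ‖y₂ - G Z‖ ≤ ρ + K := by
      calc ‖y₂ - G Z‖ ≤ ‖y₂‖ + ‖G Z‖ := norm_sub_le _ _
        _ ≤ ρ + K := add_le_add hy₂ (hK Z)
    have h3 : |‖y₁ - G Z‖ - ‖y₂ - G Z‖| ≤ ‖y₁ - y₂‖ := by
      have := abs_norm_sub_norm_le (y₁ - G Z) (y₂ - G Z)
      simpa using this
    have h4 := exp_lip ((1 / 2) * ‖y₁ - G Z‖ ^ 2) ((1 / 2) * ‖y₂ - G Z‖ ^ 2)
      (by positivity) (by positivity)
    refine h4.trans ?_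
    have h5 : (1 / 2) * ‖y₁ - G Z‖ ^ 2 - (1 / 2) * ‖y₂ - G Z‖ ^ 2
        = (1 / 2) * (‖y₁ - G Z‖ - ‖y₂ - G Z‖) * (‖y₁ - G Z‖ + ‖y₂ - G Z‖) := by ring
    rw [h5, abs_mul, abs_mul]
    have h6 : |‖y₁ - G Z‖ + ‖y₂ - G Z‖| ≤ 2 * (K + ρ) := by
      rw [abs_of_nonneg (by positivity)]; linarith
    calc |(1:ℝ) / 2| * |‖y₁ - G Z‖ - ‖y₂ - G Z‖| * |‖y₁ - G Z‖ + ‖y₂ - G Z‖|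
        ≤ (1 / 2) * ‖y₁ - y₂‖ * (2 * (K + ρ)) := by
          apply mul_le_mul _ h6 (abs_nonneg _) (by positivity)
          rw [abs_of_nonneg (by norm_num : (0:ℝ) ≤ 1/2)]
          exact mul_le_mul_of_nonneg_left h3 (by norm_num)
      _ = (K + ρ) * ‖y₁ - y₂‖ := by ring
  -- integrability
  have hint : ∀ y : E, Integrable (fun Z => θ Z y) ν₀ := by
    intro y
    have h0 : Measurable fun Z => ‖y - G Z‖ :=
      ((continuous_const.sub continuous_id).norm.measurable).comp hGmeas
    have hmeas : Measurable (fun Z => θ Z y) := by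
      simp only [hθ]
      exact (((h0.pow_const 2).const_mul _).neg).exp
    refine (integrable_const (1 : ℝ)).mono' hmeas.aestronglyMeasurable ?_
    filter_upwards with Z
    rw [hθ, Real.norm_eq_abs, abs_of_pos (Real.exp_pos _)]
    exact Real.exp_le_one_iff.mpr (neg_nonpos.mpr (by positivity))
  have hdiff : Λ y₁ - Λ y₂ = ∫ Z, (θ Z y₁ - θ Z y₂) ∂ν₀ := by
    rw [hΛ, hΛ, integral_sub (hint y₁) (hint y₂)]
  rw [hdiff, ← Real.norm_eq_abs]
  have := norm_integral_le_of_norm_le_const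
    (μ := ν₀) (f := fun Z => θ Z y₁ - θ Z y₂) (C := (K + ρ) * ‖y₁ - y₂‖)
    (Filter.Eventually.of_forall fun Z => by
      rw [Real.norm_eq_abs]; exact hpt Z)
  simpa using this
end

section
/- For every ρ > 0 there exists a constant c = c(ρ, K) > 0 such that for all y₁, y₂ ∈ E with ‖y₁‖ ≤ ρ and ‖y₂‖ ≤ ρ, and for every measurable φ : U → ℝ with ∫_U |φ| dν₀ < ∞, the posterior expectation is stable with respect to the data: |∫_U φ dν^{y₁} − ∫_U φ dν^{y₂}| ≤ c · (∫_U |φ| dν₀) · ‖y₁ − y₂‖. -/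
open MeasureTheory Real
open scoped ENNReal NNReal

lemma exp_neg_lip_aux (a b : ℝ) (ha : 0 ≤ a) (hb : 0 ≤ b) :
    |Real.exp (-a) - Real.exp (-b)| ≤ |a - b| := by
  wlog h : a ≤ b generalizing a b
  · rw [abs_sub_comm, abs_sub_comm a b]; exact this b a hb ha (le_of_not_ge h)
  · have e1 : Real.exp (-a) ≤ 1 := Real.exp_le_one_iff.2 (by linarith)
    have e2 : a - b + 1 ≤ Real.exp (a - b) := by
      have := Real.add_one_le_exp (a - b); linarith
    have e3 : Real.exp (-b) = Real.exp (-a) * Real.exp (a - b) := by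
      rw [← Real.exp_add]; ring_nf
    have e5 : Real.exp (a - b) ≤ 1 := Real.exp_le_one_iff.2 (by linarith)
    have e4 : Real.exp (-b) ≤ Real.exp (-a) := Real.exp_le_exp.2 (by linarith)
    rw [abs_of_nonneg (by linarith), abs_of_nonpos (by linarith)]
    nlinarith [Real.exp_pos (-a)]

lemma abs_integral_le_integral_abs' {α : Type*} [MeasurableSpace α] {μ : Measure α}
    (f : α → ℝ) : |∫ x, f x ∂μ| ≤ ∫ x, |f x| ∂μ := by
  simpa [Real.norm_eq_abs] using norm_integral_le_integral_norm (μ := μ) f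

lemma posterior_alg_aux (m L A d Λ₁ Λ₂ I₁ I₂ : ℝ) (hm : 0 < m) (hm1 : m ≤ 1) (hL : 0 < L)
    (hA : 0 ≤ A) (hd : 0 ≤ d) (h1 : m ≤ Λ₁) (h2 : m ≤ Λ₂)
    (hI : |I₁ - I₂| ≤ L * d * A) (hI2 : |I₂| ≤ A) (hΛd : |Λ₁ - Λ₂| ≤ L * d) :
    |Λ₁⁻¹ * I₁ - Λ₂⁻¹ * I₂| ≤ (2 * L / m ^ 2) * A * d := by
  have hΛ₁ : 0 < Λ₁ := hm.trans_le h1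
  have hΛ₂ : 0 < Λ₂ := hm.trans_le h2
  have hinv : |Λ₁⁻¹ - Λ₂⁻¹| ≤ L * d / m ^ 2 := by
    have heq : Λ₁⁻¹ - Λ₂⁻¹ = (Λ₂ - Λ₁) / (Λ₁ * Λ₂) := by
      field_simp
    rw [heq, abs_div, abs_of_pos (mul_pos hΛ₁ hΛ₂)]
    have hnum : |Λ₂ - Λ₁| ≤ L * d := by rw [abs_sub_comm]; exact hΛd
    have hden : m ^ 2 ≤ Λ₁ * Λ₂ := by
      calc m ^ 2 = m * m := sq m
      _ ≤ Λ₁ * Λ₂ := mul_le_mul h1 h2 hm.le hΛ₁.le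
    exact div_le_div₀ (by positivity) hnum (by positivity) hden
  have key : |Λ₁⁻¹ * I₁ - Λ₂⁻¹ * I₂| ≤ Λ₁⁻¹ * |I₁ - I₂| + |I₂| * |Λ₁⁻¹ - Λ₂⁻¹| := by
    have : Λ₁⁻¹ * I₁ - Λ₂⁻¹ * I₂ = Λ₁⁻¹ * (I₁ - I₂) + I₂ * (Λ₁⁻¹ - Λ₂⁻¹) := by ring
    rw [this]
    refine (abs_add_le _ _).trans ?_
    rw [abs_mul, abs_mul, abs_of_pos (by positivity)]
  refine key.trans ?_
  have t1 : Λ₁⁻¹ * |I₁ - I₂| ≤ m⁻¹ * (L * d * A) := by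
    apply mul_le_mul (inv_anti₀ hm h1) hI (abs_nonneg _) (by positivity)
  have t2 : |I₂| * |Λ₁⁻¹ - Λ₂⁻¹| ≤ A * (L * d / m ^ 2) := by
    apply mul_le_mul hI2 hinv (abs_nonneg _) hA
  refine (add_le_add t1 t2).trans ?_
  have hminv : (1:ℝ) ≤ m⁻¹ := (one_le_inv_iff₀).2 ⟨hm, hm1⟩
  have h9 : m⁻¹ ≤ m⁻¹ * m⁻¹ := le_mul_of_one_le_left (by positivity) hminv
  have h10 : m⁻¹ * (L * d * A) ≤ m⁻¹ * m⁻¹ * (L * d * A) :=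
    mul_le_mul_of_nonneg_right h9 (by positivity)
  have : (2 * L / m ^ 2) * A * d = m⁻¹ * m⁻¹ * (L * d * A) + m⁻¹ * m⁻¹ * (L * d * A) := by
    field_simp; ring
  rw [this]
  have h11 : A * (L * d / m ^ 2) = m⁻¹ * m⁻¹ * (L * d * A) := by field_simp
  rw [h11]
  linarith

/-- For every `ρ > 0` there exists `c = c(ρ, K) > 0` such that for all
`y₁, y₂ ∈ E` with `‖y₁‖ ≤ ρ`, `‖y₂‖ ≤ ρ`, and every measurable `φ : U → ℝ` with
`∫_U |φ| dν₀ < ∞`, the posterior expectation is stable with respect to the data: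
`|∫ φ dν^{y₁} − ∫ φ dν^{y₂}| ≤ c (∫ |φ| dν₀) ‖y₁ − y₂‖`,
where `ν^y = Λ(y)⁻¹ θ(·,y) dν₀`. -/
theorem posterior_expectation_stability
    {U : Type*} [MeasurableSpace U] {E : Type*}
    [NormedAddCommGroup E] [InnerProductSpace ℝ E]
    [MeasurableSpace E] [OpensMeasurableSpace E]
    (ν₀ : Measure U) [IsProbabilityMeasure ν₀]
    (G : U → E) (hGmeas : Measurable G) (K : ℝ) (hK : ∀ Z, ‖G Z‖ ≤ K)
    (θ : U → E → ℝ) (hθ : ∀ Z y, θ Z y = Real.exp (-((1 / 2) * ‖y - G Z‖ ^ 2)))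
    (Λ : E → ℝ) (hΛ : ∀ y, Λ y = ∫ Z, θ Z y ∂ν₀)
    (νpost : E → Measure U)
    (hνpost : ∀ y, νpost y = (ENNReal.ofReal (Λ y))⁻¹ •
      ν₀.withDensity (fun Z => ENNReal.ofReal (θ Z y))) :
    ∀ ρ : ℝ, 0 < ρ → ∃ c > 0, ∀ y₁ y₂ : E, ‖y₁‖ ≤ ρ → ‖y₂‖ ≤ ρ →
      ∀ φ : U → ℝ, Measurable φ → Integrable φ ν₀ →
      |(∫ Z, φ Z ∂(νpost y₁)) - ∫ Z, φ Z ∂(νpost y₂)| ≤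
        c * (∫ Z, |φ Z| ∂ν₀) * ‖y₁ - y₂‖ := by
  intro ρ hρ
  -- U is nonempty since ν₀ is a probability measure
  have hU : Nonempty U := by
    by_contra h
    rw [not_nonempty_iff] at h
    have h1 : (ν₀ : Measure U) Set.univ = 1 := measure_univ
    rw [Set.univ_eq_empty_iff.2 h, measure_empty] at h1
    exact zero_ne_one h1
  have hK0 : 0 ≤ K := (norm_nonneg _).trans (hK (Classical.arbitrary U))
  set L : ℝ := ρ + K with hLdef
  have hL : 0 < L := by positivity
  set m : ℝ := Real.exp (-((1/2) * L ^ 2)) with hmdef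
  have hm : 0 < m := Real.exp_pos _
  have hm1 : m ≤ 1 := Real.exp_le_one_iff.2 (by nlinarith)
  refine ⟨2 * L / m ^ 2, by positivity, ?_⟩
  intro y₁ y₂ hy₁ hy₂ φ hφ hφint
  -- basic pointwise facts
  have hθmeas : ∀ y : E, Measurable (fun Z => θ Z y) := by
    intro y
    have hc : Continuous (fun v : E => Real.exp (-((1 / 2) * ‖y - v‖ ^ 2))) := by
      continuity
    have : Measurable (fun Z => Real.exp (-((1 / 2) * ‖y - G Z‖ ^ 2))) :=
      hc.measurable.comp hGmeas
    simpa only [hθ] using this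
  have hθpos : ∀ Z y, 0 < θ Z y := fun Z y => by rw [hθ]; exact Real.exp_pos _
  have hθle1 : ∀ Z y, θ Z y ≤ 1 := fun Z y => by
    rw [hθ]; exact Real.exp_le_one_iff.2 (neg_nonpos.2 (by positivity))
  have hθm : ∀ (y : E), ‖y‖ ≤ ρ → ∀ Z, m ≤ θ Z y := by
    intro y hy Z
    rw [hθ, hmdef]
    apply Real.exp_le_exp.2
    have hn : ‖y - G Z‖ ≤ L := by
      calc ‖y - G Z‖ ≤ ‖y‖ + ‖G Z‖ := norm_sub_le _ _
      _ ≤ ρ + K := add_le_add hy (hK Z)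
    nlinarith [norm_nonneg (y - G Z)]
  have hθlip : ∀ Z, |θ Z y₁ - θ Z y₂| ≤ L * ‖y₁ - y₂‖ := by
    intro Z
    rw [hθ, hθ]
    refine (exp_neg_lip_aux _ _ (by positivity) (by positivity)).trans ?_
    have h1 : ‖y₁ - G Z‖ ≤ L := by
      calc ‖y₁ - G Z‖ ≤ ‖y₁‖ + ‖G Z‖ := norm_sub_le _ _
      _ ≤ ρ + K := add_le_add hy₁ (hK Z)
    have h2 : ‖y₂ - G Z‖ ≤ L := by
      calc ‖y₂ - G Z‖ ≤ ‖y₂‖ + ‖G Z‖ := norm_sub_le _ _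
      _ ≤ ρ + K := add_le_add hy₂ (hK Z)
    have h3 : |‖y₁ - G Z‖ - ‖y₂ - G Z‖| ≤ ‖y₁ - y₂‖ := by
      have := abs_norm_sub_norm_le (y₁ - G Z) (y₂ - G Z)
      simpa [sub_sub_sub_cancel_right] using this
    have h4 : (1/2) * ‖y₁ - G Z‖ ^ 2 - (1/2) * ‖y₂ - G Z‖ ^ 2 =
        (1/2) * ((‖y₁ - G Z‖ - ‖y₂ - G Z‖) * (‖y₁ - G Z‖ + ‖y₂ - G Z‖)) := by ring
    rw [h4, abs_mul, abs_mul]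
    rw [abs_of_pos (by norm_num : (0:ℝ) < 1/2),
        abs_of_nonneg (by positivity : (0:ℝ) ≤ ‖y₁ - G Z‖ + ‖y₂ - G Z‖)]
    calc (1/2) * (|‖y₁ - G Z‖ - ‖y₂ - G Z‖| * (‖y₁ - G Z‖ + ‖y₂ - G Z‖))
        ≤ (1/2) * (‖y₁ - y₂‖ * (L + L)) := by
          apply mul_le_mul_of_nonneg_left _ (by norm_num)
          exact mul_le_mul h3 (add_le_add h1 h2) (by positivity) (norm_nonneg _)
    _ = L * ‖y₁ - y₂‖ := by ring
  -- integrability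
  have hθint : ∀ y : E, Integrable (fun Z => θ Z y) ν₀ := by
    intro y
    refine (integrable_const (1:ℝ)).mono ((hθmeas y).aestronglyMeasurable) ?_
    filter_upwards with Z
    rw [Real.norm_eq_abs, abs_of_pos (hθpos Z y)]
    simpa using hθle1 Z y
  have hθφint : ∀ y : E, Integrable (fun Z => θ Z y * φ Z) ν₀ := by
    intro y
    refine hφint.mono (((hθmeas y).mul hφ).aestronglyMeasurable) ?_
    filter_upwards with Z
    rw [Real.norm_eq_abs, Real.norm_eq_abs, abs_mul, abs_of_pos (hθpos Z y)]
    exact mul_le_of_le_one_left (abs_nonneg _) (hθle1 Z y)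
  -- bounds on Λ
  have hΛm : ∀ (y : E), ‖y‖ ≤ ρ → m ≤ Λ y := by
    intro y hy
    rw [hΛ]
    calc m = ∫ _, m ∂ν₀ := by simp
    _ ≤ ∫ Z, θ Z y ∂ν₀ := integral_mono (integrable_const m) (hθint y) (hθm y hy)
  have hΛ1 : ∀ y : E, Λ y ≤ 1 := by
    intro y
    rw [hΛ]
    calc ∫ Z, θ Z y ∂ν₀ ≤ ∫ _, (1:ℝ) ∂ν₀ :=
      integral_mono (hθint y) (integrable_const 1) (fun Z => hθle1 Z y)
    _ = 1 := by simp
  -- integral over posterior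
  have hform : ∀ (y : E), ‖y‖ ≤ ρ →
      ∫ Z, φ Z ∂(νpost y) = (Λ y)⁻¹ * ∫ Z, θ Z y * φ Z ∂ν₀ := by
    intro y hy
    have hΛpos : 0 < Λ y := hm.trans_le (hΛm y hy)
    rw [hνpost y, integral_smul_measure]
    have hden : (fun Z => ENNReal.ofReal (θ Z y)) =
        (fun Z => ((fun Z => (θ Z y).toNNReal) Z : ℝ≥0∞)) := rfl
    rw [hden, integral_withDensity_eq_integral_smul
        (by exact (hθmeas y).real_toNNReal) φ]
    have h1 : ((ENNReal.ofReal (Λ y))⁻¹).toReal = (Λ y)⁻¹ := by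
      rw [ENNReal.toReal_inv, ENNReal.toReal_ofReal hΛpos.le]
    rw [h1]
    congr 1
    apply integral_congr_ae
    filter_upwards with Z
    simp [NNReal.smul_def, Real.coe_toNNReal _ (hθpos Z y).le]
  rw [hform y₁ hy₁, hform y₂ hy₂]
  -- the three integral estimates
  set A : ℝ := ∫ Z, |φ Z| ∂ν₀ with hAdef
  have hA : 0 ≤ A := integral_nonneg (fun Z => abs_nonneg _)
  set d : ℝ := ‖y₁ - y₂‖ with hddef
  have hd : 0 ≤ d := norm_nonneg _
  have hI : |(∫ Z, θ Z y₁ * φ Z ∂ν₀) - ∫ Z, θ Z y₂ * φ Z ∂ν₀| ≤ L * d * A := by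
    rw [← integral_sub (hθφint y₁) (hθφint y₂)]
    refine (abs_integral_le_integral_abs' _).trans ?_
    calc ∫ Z, |θ Z y₁ * φ Z - θ Z y₂ * φ Z| ∂ν₀
        ≤ ∫ Z, L * d * |φ Z| ∂ν₀ := by
          apply integral_mono ((hθφint y₁).sub (hθφint y₂)).abs
            (hφint.abs.const_mul (L * d))
          intro Z
          simp only [Pi.sub_apply, Pi.abs_apply]
          have heq : θ Z y₁ * φ Z - θ Z y₂ * φ Z = (θ Z y₁ - θ Z y₂) * φ Z := by ring
          rw [heq, abs_mul]
          exact mul_le_mul_of_nonneg_right (hθlip Z) (abs_nonneg _)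
    _ = L * d * A := by rw [integral_const_mul]
  have hI2 : |∫ Z, θ Z y₂ * φ Z ∂ν₀| ≤ A := by
    refine (abs_integral_le_integral_abs' _).trans ?_
    apply integral_mono (hθφint y₂).abs hφint.abs
    intro Z
    simp only [Pi.abs_apply]
    rw [abs_mul, abs_of_pos (hθpos Z y₂)]
    exact mul_le_of_le_one_left (abs_nonneg _) (hθle1 Z y₂)
  have hΛd : |Λ y₁ - Λ y₂| ≤ L * d := by
    rw [hΛ, hΛ, ← integral_sub (hθint y₁) (hθint y₂)]
    refine (abs_integral_le_integral_abs' _).trans ?_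
    have hstep : ∫ Z, |θ Z y₁ - θ Z y₂| ∂ν₀ ≤ ∫ _, L * d ∂ν₀ := by
      apply integral_mono ((hθint y₁).sub (hθint y₂)).abs (integrable_const _)
      intro Z
      simp only [Pi.sub_apply, Pi.abs_apply]
      exact hθlip Z
    simpa using hstep
  exact posterior_alg_aux m L A d (Λ y₁) (Λ y₂) _ _ hm hm1 hL hA hd
    (hΛm y₁ hy₁) (hΛm y₂ hy₂) hI hI2 hΛd
end
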